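/- Let Q be any consensus protocol that dominates the protocol P_0 (which decides 0 as soon as K_i∃0 holds and otherwise decides 1 at time t+1). Then in Q, each process i performs decide_i(0) exactly at the first time at which K_i∃0 holds. -/

import Mathlib

attribute [local instance] Classical.propDecidable

/-- An adversary in the synchronous crash-failure model: an input vector of binary
initial values, a failure pattern given by the delivery relation `F` (`F m j i` means
the message sent by `j` at time `m` is delivered to `i` at time `m+1`, i.e. in round `m+1`),
and a crash round for each process (`⊤` meaning the process never crashes).
A process behaves correctly before its crashing round and sends nothing afterwards;
during its crashing round it may send to an arbitrary subset. -/
structure Adversary (n : ℕ) where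
  init : Fin n → Bool
  F : ℕ → Fin n → Fin n → Prop
  crash : Fin n → ℕ∞
  crash_pos : ∀ j, 1 ≤ crash j
  before_crash : ∀ (m : ℕ) (j i : Fin n), ((m + 1 : ℕ) : ℕ∞) < crash j → F m j i
  after_crash : ∀ (m : ℕ) (j i : Fin n), crash j < ((m + 1 : ℕ) : ℕ∞) → ¬ F m j i

namespace Adversary

variable {n : ℕ}

/-- A process is faulty if it crashes at some point. -/
def Faulty (A : Adversary n) (j : Fin n) : Prop := A.crash j ≠ ⊤

/-- The number `f` of actual failures in the run determined by the adversary. -/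
noncomputable def numFaults (A : Adversary n) : ℕ := {j | A.Faulty j}.ncard

/-- A process is active at time `m` if it has not crashed before time `m`. -/
def Active (A : Adversary n) (j : Fin n) (m : ℕ) : Prop := ((m : ℕ) : ℕ∞) < A.crash j

end Adversary

/-- `Seen A ⟨j,ℓ⟩ ⟨i,m⟩`: node `⟨j,ℓ⟩` is in the view (communication graph) of node
`⟨i,m⟩`, i.e. there is a message chain from `⟨j,ℓ⟩` to `⟨i,m⟩`. -/
inductive Seen {n : ℕ} (A : Adversary n) : Fin n × ℕ → Fin n × ℕ → Prop
  | refl (p : Fin n × ℕ) : Seen A p p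
  | self {p : Fin n × ℕ} {i : Fin n} {m : ℕ} : Seen A p (i, m) → Seen A p (i, m + 1)
  | step {p : Fin n × ℕ} {j i : Fin n} {m : ℕ} : Seen A p (j, m) → A.F m j i →
      Seen A p (i, m + 1)

open Adversary

/-- Two adversaries give process `i` the same view at time `m` in a full-information
protocol: the same nodes are seen, with the same initial values at seen time-0 nodes
and the same incoming edges at seen later nodes. -/
def sameView {n : ℕ} (A B : Adversary n) (i : Fin n) (m : ℕ) : Prop :=
  (∀ p, Seen A p (i, m) ↔ Seen B p (i, m)) ∧
  (∀ j, Seen A (j, 0) (i, m) → A.init j = B.init j) ∧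
  (∀ (k : ℕ) (j j' : Fin n), Seen A (j', k + 1) (i, m) → (A.F k j j' ↔ B.F k j j'))

/-- The local state of (active) process `i` at time `m` is the same under both
adversaries: `i` is active in both and has the same full-information view. -/
def sameLocal {n : ℕ} (A B : Adversary n) (i : Fin n) (m : ℕ) : Prop :=
  A.Active i m ∧ B.Active i m ∧ sameView A B i m

/-- The runs of the system are those generated by adversaries with at most `t` crashes. -/
def Valid {n : ℕ} (t : ℕ) (A : Adversary n) : Prop := A.numFaults ≤ t

/-- Knowledge in the full-information protocol: `i` knows the fact `φ` at time `m`
iff `φ` holds at time `m` in every run (with at most `t` failures) in which `i` has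
the same local state. -/
def Knows {n : ℕ} (t : ℕ) (φ : Adversary n → ℕ → Prop) (A : Adversary n) (i : Fin n)
    (m : ℕ) : Prop :=
  ∀ B : Adversary n, Valid t B → sameLocal A B i m → φ B m

/-- The fact `∃v`: some process has initial value `v`. -/
def existsVal {n : ℕ} (v : Bool) : Adversary n → ℕ → Prop := fun A _ => ∃ j, A.init j = v

/-- Node `⟨j',m'⟩` is revealed to `⟨i,m⟩`: either it is seen by `⟨i,m⟩`, or for some
seen node `⟨i',m'⟩` the edge `(⟨j',m'-1⟩,⟨i',m'⟩)` is absent from `i`'s view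
(proving that `j'` crashed before time `m'`). -/
def RevealedNode {n : ℕ} (A : Adversary n) (j' : Fin n) (m' : ℕ) (i : Fin n) (m : ℕ) :
    Prop :=
  Seen A (j', m') (i, m) ∨
  ∃ (i' : Fin n) (k : ℕ), m' = k + 1 ∧ Seen A (i', k + 1) (i, m) ∧ ¬ A.F k j' i'

/-- Time `k` is revealed to `⟨i,m⟩` if every node `⟨j',k⟩` is revealed to `⟨i,m⟩`. -/
def RevealedTime {n : ℕ} (A : Adversary n) (k : ℕ) (i : Fin n) (m : ℕ) : Prop :=
  ∀ j', RevealedNode A j' k i m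

/-- A hidden path w.r.t. `⟨i,m⟩`: for each `k ≤ m` a node `⟨j_k,k⟩` not revealed to `⟨i,m⟩`. -/
def HiddenPath {n : ℕ} (A : Adversary n) (i : Fin n) (m : ℕ) : Prop :=
  ∃ js : ℕ → Fin n, ∀ k ≤ m, ¬ RevealedNode A (js k) k i m

/-- `not-known(∃0)`: no process active at time `m` knows `∃0`. -/
def notKnown0 {n : ℕ} (t : ℕ) : Adversary n → ℕ → Prop :=
  fun A m => ∀ j, A.Active j m → ¬ Knows t (existsVal false) A j m

/-- A (full-information, deterministic) decision protocol, described by the decision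
status function: `P A i m = some v` iff by time `m` process `i` has decided `v`
in the run determined by adversary `A`. -/
abbrev ProtoDec (n : ℕ) : Type := Adversary n → Fin n → ℕ → Option Bool

/-- Sanity conditions making a decision-status function a protocol: decisions are
irrevocable, and (for active processes) depend only on the local state. -/
def IsProtocol {n : ℕ} (t : ℕ) (P : ProtoDec n) : Prop :=
  (∀ A i m v, P A i m = some v → P A i (m + 1) = some v) ∧
  (∀ A B i m, Valid t A → Valid t B → sameLocal A B i m → P A i m = P B i m)

/-- Process `i` performs the action `decide(v)` at time `m`: it is decided on `v`
at `m` and was undecided before. -/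
def DecidesAt {n : ℕ} (P : ProtoDec n) (A : Adversary n) (i : Fin n) (m : ℕ) (v : Bool) :
    Prop :=
  P A i m = some v ∧ ∀ k < m, P A i k = none

/-- Decision: every correct process eventually decides. -/
def Decision {n : ℕ} (t : ℕ) (P : ProtoDec n) : Prop :=
  ∀ A : Adversary n, Valid t A → ∀ i, ¬ A.Faulty i → ∃ m, P A i m ≠ none

/-- Validity: if all initial values are `v` then correct processes decide `v`. -/
def Validity {n : ℕ} (t : ℕ) (P : ProtoDec n) : Prop :=
  ∀ A : Adversary n, Valid t A → ∀ v : Bool, (∀ j, A.init j = v) →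
    ∀ i m w, ¬ A.Faulty i → P A i m = some w → w = v

/-- Agreement: all correct processes decide on the same value. -/
def Agreement {n : ℕ} (t : ℕ) (P : ProtoDec n) : Prop :=
  ∀ A : Adversary n, Valid t A → ∀ i j m m' v w, ¬ A.Faulty i → ¬ A.Faulty j →
    P A i m = some v → P A j m' = some w → v = w

def ConsensusSolves {n : ℕ} (t : ℕ) (P : ProtoDec n) : Prop :=
  Decision t P ∧ Validity t P ∧ Agreement t P

/-- Uniform Agreement: all processes that decide (faulty or not) decide the same value. -/
def UniformAgreement {n : ℕ} (t : ℕ) (P : ProtoDec n) : Prop :=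
  ∀ A : Adversary n, Valid t A → ∀ i j m m' v w,
    P A i m = some v → P A j m' = some w → v = w

def UniformConsensusSolves {n : ℕ} (t : ℕ) (P : ProtoDec n) : Prop :=
  Decision t P ∧ Validity t P ∧ UniformAgreement t P

/-- `Q` dominates `P`: for every adversary and process, if `i` has decided by time `m`
in `P` then `i` has decided by time `m` in `Q`. -/
def Dominates {n : ℕ} (t : ℕ) (Q P : ProtoDec n) : Prop :=
  ∀ A : Adversary n, Valid t A → ∀ i m, P A i m ≠ none → Q A i m ≠ none

def StrictlyDominates {n : ℕ} (t : ℕ) (Q P : ProtoDec n) : Prop :=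
  Dominates t Q P ∧ ¬ Dominates t P Q

/-- Turn a per-time decision rule into a decision-status function (the first decision
taken is kept forever). -/
def runDec (step : ℕ → Option Bool) : ℕ → Option Bool
  | 0 => step 0
  | m + 1 => (runDec step m).elim (step (m + 1)) some

/-- The protocol `P₀`: decide 0 as soon as `K_i ∃0` holds, otherwise decide 1 at time `t+1`. -/
noncomputable def P0 (n t : ℕ) : ProtoDec n := fun A i =>
  runDec fun m =>
    if Knows t (existsVal false) A i m then some false
    else if m = t + 1 then some true
    else none

/-- The unbeatable protocol `Opt₀`: decide 0 as soon as `K_i ∃0` holds, and decide 1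
as soon as `K_i not-known(∃0)` holds. -/
noncomputable def Opt0 (n t : ℕ) : ProtoDec n := fun A i =>
  runDec fun m =>
    if Knows t (existsVal false) A i m then some false
    else if Knows t (notKnown0 t) A i m then some true
    else none

/-- The number of processes with initial value `false` (0). -/
noncomputable def zeros {n : ℕ} (A : Adversary n) : ℕ :=
  (Finset.univ.filter fun j => A.init j = false).card

/-- The number of processes with initial value `true` (1). -/
noncomputable def ones {n : ℕ} (A : Adversary n) : ℕ :=
  (Finset.univ.filter fun j => A.init j = true).card

/-- The fact `Maj = 0`: at least `n/2` initial values are 0. -/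
def Maj0 (n : ℕ) : Adversary n → ℕ → Prop := fun A _ => n ≤ 2 * zeros A

/-- The fact `Maj = 1`: strictly more than `n/2` initial values are 1. -/
def Maj1 (n : ℕ) : Adversary n → ℕ → Prop := fun A _ => n < 2 * ones A

noncomputable def seenZeros {n : ℕ} (A : Adversary n) (i : Fin n) (m : ℕ) : ℕ :=
  (Finset.univ.filter fun j => Seen A (j, 0) (i, m) ∧ A.init j = false).card

noncomputable def seenOnes {n : ℕ} (A : Adversary n) (i : Fin n) (m : ℕ) : ℕ :=
  (Finset.univ.filter fun j => Seen A (j, 0) (i, m) ∧ A.init j = true).card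

/-- `Maj(vals(i,m))`: 0 if at least half of the initial values known to `i` at `m`
are 0, and 1 otherwise. -/
noncomputable def MajSeen {n : ℕ} (A : Adversary n) (i : Fin n) (m : ℕ) : Bool :=
  if seenOnes A i m ≤ seenZeros A i m then false else true

/-- The unbeatable majority consensus protocol `Opt_Maj`. -/
noncomputable def OptMaj (n t : ℕ) : ProtoDec n := fun A i =>
  runDec fun m =>
    if Knows t (Maj0 n) A i m then some false
    else if Knows t (Maj1 n) A i m then some true
    else if ∃ k ≤ m, RevealedTime A k i m then some (MajSeen A i m)
    else none

/-- The fact `∀1`: all initial values are 1. -/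
def all1 (n : ℕ) : Adversary n → ℕ → Prop := fun A _ => ∀ j, A.init j = true

/-- The sender set of `i` repeats at `⟨i,m⟩`: `i` hears from the same set of processes
in rounds `m-1` and `m` (only meaningful for `m ≥ 2`). -/
def senderSetRepeats {n : ℕ} (A : Adversary n) (i : Fin n) (m : ℕ) : Prop :=
  ∀ j, (A.F (m - 2) j i ↔ A.F (m - 1) j i)

/-- The protocol `P0_opt` of Halpern, Moses and Waarts. -/
noncomputable def P0opt (n t : ℕ) : ProtoDec n := fun A i =>
  runDec fun m =>
    if Knows t (existsVal false) A i m then some false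
    else if Knows t (all1 n) A i m ∨ (2 ≤ m ∧ senderSetRepeats A i m) then some true
    else none

/-- The fact `∃correct(v)`: some correct (never-failing) process knows `∃v`. -/
def ExistsCorrectKnows {n : ℕ} (t : ℕ) (v : Bool) : Adversary n → ℕ → Prop :=
  fun A m => ∃ j, ¬ A.Faulty j ∧ Knows t (existsVal v) A j m

/-- The number `d` of failures process `i` knows of at time `m`: the number of
processes `j ≠ i` from which `i` receives no message in round `m`. -/
noncomputable def knownFaults {n : ℕ} (A : Adversary n) (i : Fin n) : ℕ → ℕ
  | 0 => 0
  | m + 1 => (Finset.univ.filter fun j => j ≠ i ∧ ¬ A.F m j i).card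

/-- The protocol `u-P₀` for uniform consensus: decide 0 as soon as
`K_i ∃correct(0)` holds, otherwise decide 1 at time `t+1`. -/
noncomputable def uP0 (n t : ℕ) : ProtoDec n := fun A i =>
  runDec fun m =>
    if Knows t (ExistsCorrectKnows t false) A i m then some false
    else if m = t + 1 then some true
    else none

/-- The unbeatable uniform consensus protocol `u-Opt₀`. -/
noncomputable def uOpt0 (n t : ℕ) : ProtoDec n := fun A i =>
  runDec fun m =>
    if Knows t (ExistsCorrectKnows t false) A i m then some false
    else if ¬ Knows t (existsVal false) A i m ∧ ∃ k ≤ m, RevealedTime A k i m then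
      some true
    else none

/-- All decisions in the run `P[A]` are taken at or before time `m`. -/
def AllDecidedBy {n : ℕ} (P : ProtoDec n) (A : Adversary n) (m : ℕ) : Prop :=
  ∀ i k, P A i k ≠ none → P A i m ≠ none

/-- `Q` last-decider dominates `P`. -/
def LDDominates {n : ℕ} (t : ℕ) (Q P : ProtoDec n) : Prop :=
  ∀ A : Adversary n, Valid t A → ∀ m, AllDecidedBy P A m → AllDecidedBy Q A m

/-- A 0-chain for `⟨i,m⟩`: distinct processes `j₀,…,j_d = i` with `d ≤ m`, `j₀` having
initial value 0, and `j_k` receiving a message from `j_{k-1}` at time `k` (round `k`). -/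
def ZeroChain {n : ℕ} (A : Adversary n) (i : Fin n) (m : ℕ) : Prop :=
  ∃ d ≤ m, ∃ js : ℕ → Fin n, js d = i ∧
    (∀ k ≤ d, ∀ l ≤ d, js k = js l → k = l) ∧
    A.init (js 0) = false ∧
    ∀ k, 1 ≤ k → k ≤ d → A.F (k - 1) (js (k - 1)) (js k)

section Aux

variable {n : ℕ}

lemma seen_le {A : Adversary n} : ∀ {p q : Fin n × ℕ}, Seen A p q → p.2 ≤ q.2 := by
  intro p q h
  induction h with
  | refl => exact le_refl _
  | self h ih => exact ih.trans (Nat.le_succ _)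
  | step h hF ih => exact ih.trans (Nat.le_succ _)

lemma seen_same {A : Adversary n} {p q : Fin n × ℕ} (h : Seen A p q) (he : p.2 = q.2) :
    p.1 = q.1 := by
  induction h with
  | refl => rfl
  | self h ih =>
    have h2 := seen_le h
    exact absurd he (by simp at h2 ⊢; omega)
  | step h hF ih =>
    have h2 := seen_le h
    exact absurd he (by simp at h2 ⊢; omega)

lemma seen_trans {A : Adversary n} {p q r : Fin n × ℕ} (h1 : Seen A p q) (h2 : Seen A q r) :
    Seen A p r := by
  induction h2 with
  | refl => exact h1
  | self h ih => exact Seen.self ih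
  | step h hF ih => exact Seen.step ih hF

lemma seen_mono {A B : Adversary n} (hF : ∀ l j x, A.F l j x → B.F l j x) :
    ∀ {p q : Fin n × ℕ}, Seen A p q → Seen B p q := by
  intro p q h
  induction h with
  | refl => exact Seen.refl p
  | self h ih => exact Seen.self ih
  | step h hf ih => exact Seen.step ih (hF _ _ _ hf)

lemma seen_pred_step {A : Adversary n} {y x : Fin n} {l : ℕ}
    (h : Seen A (y, l) (x, l + 1)) : y = x ∨ A.F l y x := by
  cases h with
  | self h => exact Or.inl (seen_same h rfl)
  | step h hF =>
    rename_i j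
    have e : y = j := seen_same h rfl
    rw [e]
    exact Or.inr hF

lemma active_mono {A : Adversary n} {i : Fin n} {k m : ℕ} (h : A.Active i m) (hk : k ≤ m) :
    A.Active i k :=
  lt_of_le_of_lt (by exact_mod_cast hk) h

lemma seen_chain {A : Adversary n} :
    ∀ {p q : Fin n × ℕ}, Seen A p q → A.Active q.1 q.2 → ∀ l, p.2 ≤ l → l ≤ q.2 →
      ∃ y, Seen A p (y, l) ∧ Seen A (y, l) q ∧ A.Active y l := by
  intro p q h
  induction h with
  | refl =>
    intro hAct l h1 h2
    have : l = p.2 := le_antisymm h2 h1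
    subst this
    exact ⟨p.1, by rw [Prod.mk.eta]; exact Seen.refl p,
      by rw [Prod.mk.eta]; exact Seen.refl p, hAct⟩
  | self h ih =>
    rename_i i m
    intro hAct l h1 h2
    by_cases hle : l ≤ m
    · have hAct' : A.Active i m := active_mono hAct (Nat.le_succ _)
      obtain ⟨y, a, b, c⟩ := ih hAct' l h1 hle
      exact ⟨y, a, Seen.self b, c⟩
    · have : l = m + 1 := by omega
      subst this
      exact ⟨i, Seen.self h, Seen.refl _, hAct⟩
  | step h hF ih =>
    rename_i j i m
    intro hAct l h1 h2
    by_cases hle : l ≤ m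
    · have hactj : A.Active j m := by
        have hnc : ¬ (A.crash j < ((m + 1 : ℕ) : ℕ∞)) := fun hc => A.after_crash m j i hc hF
        have hge : ((m + 1 : ℕ) : ℕ∞) ≤ A.crash j := not_lt.1 hnc
        exact lt_of_lt_of_le (by exact_mod_cast Nat.lt_succ_self m) hge
      obtain ⟨y, a, b, c⟩ := ih hactj l h1 hle
      exact ⟨y, a, Seen.step b hF, c⟩
    · have : l = m + 1 := by omega
      subst this
      exact ⟨i, Seen.step h hF, Seen.refl _, hAct⟩

lemma seen_of_seen_restrict {A B : Adversary n} {i : Fin n} {m : ℕ}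
    (hback : ∀ l j y, Seen B (y, l + 1) (i, m) → B.F l j y → A.F l j y) :
    ∀ {p q : Fin n × ℕ}, Seen B p q → Seen B q (i, m) → Seen A p q := by
  intro p q h
  induction h with
  | refl => intro _; exact Seen.refl p
  | self h ih =>
    intro hq
    exact Seen.self (ih (seen_trans (Seen.self (Seen.refl _)) hq))
  | step h hF ih =>
    rename_i j x l
    intro hq
    have hj : Seen B (j, l) (i, m) := seen_trans (Seen.step (Seen.refl _) hF) hq
    exact Seen.step (ih hj) (hback _ _ _ hq hF)

/-- Remove the crashes of the processes in `S`. -/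
noncomputable def liftCrash (A : Adversary n) (S : Fin n → Prop) : Adversary n where
  init := A.init
  F := fun l j x => if S j then True else A.F l j x
  crash := fun j => if S j then ⊤ else A.crash j
  crash_pos := by
    intro j
    by_cases hS : S j
    · simp [hS]
    · simpa [hS] using A.crash_pos j
  before_crash := by
    intro m j i h
    by_cases hS : S j
    · simp [hS]
    · simp only [if_neg hS] at h ⊢
      exact A.before_crash _ _ _ h
  after_crash := by
    intro m j i h
    by_cases hS : S j
    · simp only [if_pos hS] at h
      exact absurd h (not_top_lt)
    · simp only [if_neg hS] at h ⊢
      exact A.after_crash _ _ _ h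

lemma liftCrash_F_mono {A : Adversary n} {S : Fin n → Prop} :
    ∀ l j x, A.F l j x → (liftCrash A S).F l j x := by
  intro l j x h
  by_cases hS : S j <;> simp [liftCrash, hS, h]

lemma liftCrash_crash_le {A : Adversary n} {S : Fin n → Prop} (j : Fin n) :
    A.crash j ≤ (liftCrash A S).crash j := by
  by_cases hS : S j <;> simp [liftCrash, hS]

lemma liftCrash_active {A : Adversary n} {S : Fin n → Prop} {j : Fin n} {l : ℕ}
    (h : A.Active j l) : (liftCrash A S).Active j l :=
  lt_of_lt_of_le h (liftCrash_crash_le j)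

lemma liftCrash_active_top {A : Adversary n} {S : Fin n → Prop} {j : Fin n} (hS : S j)
    (l : ℕ) : (liftCrash A S).Active j l := by
  simp only [Adversary.Active, liftCrash, if_pos hS]
  exact Ne.lt_top (by simp)

lemma liftCrash_not_faulty {A : Adversary n} {S : Fin n → Prop} {j : Fin n} (hS : S j) :
    ¬ (liftCrash A S).Faulty j := by
  simp [Adversary.Faulty, liftCrash, hS]

lemma liftCrash_valid {t : ℕ} {A : Adversary n} {S : Fin n → Prop} (hA : Valid t A) :
    Valid t (liftCrash A S) := by
  refine le_trans (Set.ncard_le_ncard ?_ (Set.toFinite _)) hA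
  intro j hj
  simp only [Set.mem_setOf_eq, Adversary.Faulty, liftCrash] at hj ⊢
  by_cases hS : S j
  · simp [hS] at hj
  · simpa [hS] using hj

lemma liftCrash_sameLocal {A : Adversary n} {S : Fin n → Prop} {i : Fin n} {m : ℕ}
    (hAct : A.Active i m)
    (hcond : ∀ j, S j → ∀ l x, l + 1 ≤ m → ¬ A.F l j x → (l + 1 = m ∧ x ≠ i)) :
    sameLocal A (liftCrash A S) i m := by
  set B := liftCrash A S with hB
  have hback : ∀ l j y, Seen B (y, l + 1) (i, m) → B.F l j y → A.F l j y := by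
    intro l j y hy e
    by_cases hAF : A.F l j y
    · exact hAF
    have hS : S j := by
      by_contra hS
      simp only [hB, liftCrash, if_neg hS] at e
      exact hAF e
    have hle : l + 1 ≤ m := seen_le hy
    obtain ⟨he, hne⟩ := hcond j hS l y hle hAF
    exact absurd (seen_same hy (by simpa using he)) hne
  refine ⟨hAct, liftCrash_active hAct, ?_, ?_, ?_⟩
  · intro p
    constructor
    · exact fun h => seen_mono liftCrash_F_mono h
    · exact fun h => seen_of_seen_restrict hback h (Seen.refl _)
  · intro j _; rfl
  · intro k j j' hsA
    constructor
    · exact fun h => liftCrash_F_mono _ _ _ h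
    · intro e
      by_cases hAF : A.F k j j'
      · exact hAF
      have hS : S j := by
        by_contra hS
        simp only [hB, liftCrash, if_neg hS] at e
        exact hAF e
      have hle : k + 1 ≤ m := seen_le hsA
      obtain ⟨he, hne⟩ := hcond j hS k j' hle hAF
      exact absurd (seen_same hsA (by simpa using he)) hne

lemma knows_of_seen {t : ℕ} {A : Adversary n} {j0 i : Fin n} {m : ℕ} {v : Bool}
    (hj : Seen A (j0, 0) (i, m)) (hv : A.init j0 = v) :
    Knows t (existsVal v) A i m := by
  intro C hC hloc
  refine ⟨j0, ?_⟩
  rw [← hloc.2.2.2.1 j0 hj]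
  exact hv

lemma seen_of_knows {t : ℕ} {A : Adversary n} {i : Fin n} {m : ℕ} (hA : Valid t A)
    (hAct : A.Active i m) (v : Bool) (hK : Knows t (existsVal v) A i m) :
    ∃ j, Seen A (j, 0) (i, m) ∧ A.init j = v := by
  by_contra hno
  push_neg at hno
  set B : Adversary n :=
    { init := fun j => if Seen A (j, 0) (i, m) then A.init j else !v
      F := A.F
      crash := A.crash
      crash_pos := A.crash_pos
      before_crash := A.before_crash
      after_crash := A.after_crash } with hBdef
  have hBval : Valid t B := hA
  have hloc : sameLocal A B i m := by
    refine ⟨hAct, hAct, ?_, ?_, ?_⟩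
    · intro p
      exact ⟨fun h => seen_mono (A := A) (B := B) (fun _ _ _ h => h) h,
        fun h => seen_mono (A := B) (B := A) (fun _ _ _ h => h) h⟩
    · intro j hj
      simp [hBdef, hj]
    · intro k j j' _
      exact Iff.rfl
  obtain ⟨j, hj⟩ := hK B hBval hloc
  by_cases hs : Seen A (j, 0) (i, m)
  · simp only [hBdef, if_pos hs] at hj
    exact hno j hs hj
  · simp only [hBdef, if_neg hs] at hj
    exact absurd hj (by simp)

lemma runDec_ne_none (step : ℕ → Option Bool) (m : ℕ) (h : step m ≠ none) :
    runDec step m ≠ none := by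
  cases m with
  | zero => exact h
  | succ m =>
    cases hr : runDec step m with
    | none => simpa [runDec, hr] using h
    | some v => simp [runDec, hr]

lemma P0_ne_none {t : ℕ} {A : Adversary n} {i : Fin n} {m : ℕ}
    (hK : Knows t (existsVal false) A i m) : P0 n t A i m ≠ none := by
  have h : (if Knows t (existsVal false) A i m then some false
      else if m = t + 1 then some true else none) ≠ none := by
    rw [if_pos hK]; simp
  exact runDec_ne_none _ m h

lemma kop {t : ℕ} {Q : ProtoDec n} (hQ : IsProtocol t Q) (hC : ConsensusSolves t Q)
    {A : Adversary n} (hA : Valid t A) {i : Fin n} {k : ℕ} {v : Bool}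
    (hAct : A.Active i k) (hd : Q A i k = some v) :
    Knows t (existsVal v) A i k := by
  by_contra hnk
  simp only [Knows, not_forall] at hnk
  obtain ⟨B, hBv, hBl, hBno⟩ := hnk
  have hinit : ∀ j, B.init j = !v := by
    intro j
    simp only [existsVal, not_exists] at hBno
    have h2 := hBno j
    cases hB : B.init j <;> cases v <;> simp_all
  set C := liftCrash B (fun j => (k : ℕ∞) < B.crash j) with hCdef
  have hcond : ∀ j, ((k : ℕ∞) < B.crash j) → ∀ l x, l + 1 ≤ k → ¬ B.F l j x →
      (l + 1 = k ∧ x ≠ i) := by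
    intro j hSj l x hl hnF
    exact absurd (B.before_crash l j x (lt_of_le_of_lt (by exact_mod_cast hl) hSj)) hnF
  have hlocBC : sameLocal B C i k := liftCrash_sameLocal hBl.2.1 hcond
  have hCv : Valid t C := liftCrash_valid hBv
  have hdC : Q C i k = some v := by
    rw [← hQ.2 B C i k hBv hCv hlocBC, ← hQ.2 A B i k hA hBv hBl]
    exact hd
  have hval := hC.2.1 C hCv (!v) (fun j => hinit j) i k v
    (liftCrash_not_faulty hBl.2.1) hdC
  exact absurd hval (by simp)

lemma enat_le_of_pred_lt {c : ℕ∞} {m : ℕ} (hm : 1 ≤ m) (h : ((m - 1 : ℕ) : ℕ∞) < c) :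
    (m : ℕ∞) ≤ c := by
  cases c with
  | top => exact le_top
  | coe b =>
    have : m - 1 < b := by exact_mod_cast h
    exact_mod_cast (by omega : m ≤ b)


lemma Mlem {n t : ℕ} (Q : ProtoDec n) (hQ : IsProtocol t Q) (hC : ConsensusSolves t Q)
    (hdom : Dominates t Q (P0 n t)) :
    ∀ m (A : Adversary n), Valid t A → ∀ i, A.Active i m →
      Knows t (existsVal false) A i m →
      (∀ l < m, ¬ Knows t (existsVal false) A i l) →
      DecidesAt Q A i m false := by
  intro m
  induction m using Nat.strong_induction_on with
  | _ m IH =>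
  intro A hA i hAct hK hfirst
  obtain ⟨j0, hj0seen, hj0val⟩ := seen_of_knows hA hAct false hK
  have hnotrue : ∀ k ≤ m, Q A i k ≠ some true := by
    intro k hkm hdec
    have hActk : A.Active i k := active_mono hAct hkm
    by_cases hkm' : k < m
    · -- deciding 1 strictly before m
      obtain ⟨j', hs1, hs2, hactj'⟩ := seen_chain hj0seen hAct k (Nat.zero_le _) hkm
      set B := liftCrash A (fun j => (k : ℕ∞) < A.crash j) with hBdef
      have hcond : ∀ j, ((k : ℕ∞) < A.crash j) → ∀ l x, l + 1 ≤ k → ¬ A.F l j x →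
          (l + 1 = k ∧ x ≠ i) := by
        intro j hSj l x hl hnF
        exact absurd (A.before_crash l j x (lt_of_le_of_lt (by exact_mod_cast hl) hSj)) hnF
      have hlocik : sameLocal A B i k := liftCrash_sameLocal hActk hcond
      have hBval : Valid t B := liftCrash_valid hA
      have hKj' : Knows t (existsVal false) B j' k :=
        knows_of_seen (seen_mono liftCrash_F_mono hs1) hj0val
      have hex : ∃ l, Knows t (existsVal false) B j' l := ⟨k, hKj'⟩
      have hn0 : Nat.find hex ≤ k := Nat.find_le hKj'
      have hDec := IH (Nat.find hex) (lt_of_le_of_lt hn0 hkm') B hBval j'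
        (liftCrash_active_top hactj' _) (Nat.find_spec hex)
        (fun l hl => Nat.find_min hex hl)
      have hdec' : Q B i k = some true := by
        rw [← hQ.2 A B i k hA hBval hlocik]; exact hdec
      have hAgr := hC.2.2 B hBval i j' k (Nat.find hex) true false
        (liftCrash_not_faulty hActk) (liftCrash_not_faulty hactj') hdec' hDec.1
      simp at hAgr
    · -- k = m
      have hkm0 : k = m := le_antisymm hkm (not_lt.1 hkm')
      subst hkm0
      rcases Nat.eq_zero_or_pos k with h0 | hm1
      · subst h0
        have hK1 : Knows t (existsVal true) A i 0 := kop hQ hC hA hAct hdec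
        obtain ⟨j1, hj1s, hj1v⟩ := seen_of_knows hA hAct true hK1
        have e1 : j1 = i := seen_same hj1s rfl
        have e0 : j0 = i := seen_same hj0seen rfl
        rw [e1] at hj1v
        rw [e0] at hj0val
        simp_all
      · obtain ⟨j'', hs1, hs2, hactj''⟩ :=
          seen_chain hj0seen hAct (k - 1) (Nat.zero_le _) (Nat.pred_le k)
        by_cases hji : j'' = i
        · subst hji
          exact hfirst (k - 1) (by omega) (knows_of_seen hs1 hj0val)
        · have hm' : k - 1 + 1 = k := by omega
          have hs2' : Seen A (j'', k - 1) (i, (k - 1) + 1) := by rw [hm']; exact hs2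
          have hF : A.F (k - 1) j'' i := (seen_pred_step hs2').resolve_left hji
          set B := liftCrash A (fun j => (k : ℕ∞) < A.crash j ∨ j = j'') with hBdef
          have hge : (k : ℕ∞) ≤ A.crash j'' := enat_le_of_pred_lt hm1 hactj''
          have hcond : ∀ j, ((k : ℕ∞) < A.crash j ∨ j = j'') →
              ∀ l x, l + 1 ≤ k → ¬ A.F l j x → (l + 1 = k ∧ x ≠ i) := by
            intro j hSj l x hl hnF
            rcases hSj with hSj | hSj
            · exact absurd
                (A.before_crash l j x (lt_of_le_of_lt (by exact_mod_cast hl) hSj)) hnF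
            · subst hSj
              rcases lt_or_eq_of_le hl with hl' | hl'
              · exact absurd (A.before_crash l j x
                  (lt_of_lt_of_le (by exact_mod_cast hl') hge)) hnF
              · refine ⟨hl', ?_⟩
                intro hx
                subst hx
                have : l = k - 1 := by omega
                subst this
                exact hnF hF
          have hlocim : sameLocal A B i k := liftCrash_sameLocal hAct hcond
          have hBval : Valid t B := liftCrash_valid hA
          have hKj'' : Knows t (existsVal false) B j'' (k - 1) :=
            knows_of_seen (seen_mono liftCrash_F_mono hs1) hj0val
          have hex : ∃ l, Knows t (existsVal false) B j'' l := ⟨k - 1, hKj''⟩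
          have hn0 : Nat.find hex ≤ k - 1 := Nat.find_le hKj''
          have hDec := IH (Nat.find hex) (by omega) B hBval j''
            (liftCrash_active_top (Or.inr rfl) _) (Nat.find_spec hex)
            (fun l hl => Nat.find_min hex hl)
          have hdec' : Q B i k = some true := by
            rw [← hQ.2 A B i k hA hBval hlocim]; exact hdec
          have hAgr := hC.2.2 B hBval i j'' k (Nat.find hex) true false
            (liftCrash_not_faulty (Or.inl hAct)) (liftCrash_not_faulty (Or.inr rfl))
            hdec' hDec.1
          simp at hAgr
  have hQm : Q A i m ≠ none := hdom A hA i m (P0_ne_none hK)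
  constructor
  · cases hv : Q A i m with
    | none => exact absurd hv hQm
    | some v =>
      cases v with
      | false => rfl
      | true => exact absurd hv (hnotrue m le_rfl)
  · intro k hk
    cases hv : Q A i k with
    | none => rfl
    | some w =>
      cases w with
      | false =>
        have := kop hQ hC hA (active_mono hAct (le_of_lt hk)) hv
        exact absurd this (hfirst k hk)
      | true => exact absurd hv (hnotrue k (le_of_lt hk))

end Aux

/-- In any consensus protocol `Q` dominating `P₀`, each (active) process decides 0
exactly at the first time at which `K_i ∃0` holds. -/
theorem dominating_P0_decides_zero_at_first_knowledge (n t : ℕ) (ht : t < n)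
    (Q : ProtoDec n) (hQ : IsProtocol t Q) (hC : ConsensusSolves t Q)
    (hdom : Dominates t Q (P0 n t)) :
    ∀ A : Adversary n, Valid t A → ∀ (i : Fin n) (m : ℕ), A.Active i m →
      (DecidesAt Q A i m false ↔
        (Knows t (existsVal false) A i m ∧ ∀ k < m, ¬ Knows t (existsVal false) A i k)) := by

  intro A hA i m hAct
  constructor
  · intro hD
    refine ⟨kop hQ hC hA hAct hD.1, ?_⟩
    intro k hk hKk
    have hex : ∃ l, Knows t (existsVal false) A i l := ⟨k, hKk⟩
    have hm0k : Nat.find hex ≤ k := Nat.find_le hKk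
    have hDec := Mlem Q hQ hC hdom (Nat.find hex) A hA i
      (active_mono hAct (le_of_lt (lt_of_le_of_lt hm0k hk))) (Nat.find_spec hex)
      (fun l hl => Nat.find_min hex hl)
    have h1 := hDec.1
    rw [hD.2 (Nat.find hex) (lt_of_le_of_lt hm0k hk)] at h1
    exact absurd h1 (by simp)
  · rintro ⟨hK, hfirst⟩
    exact Mlem Q hQ hC hdom m A hA i hAct hK hfirst
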